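/- Let H be a finite-dimensional real Hilbert space, let A, B, C be linear operators on H, let a₁,…,a_m > 0, b₁,…,b_m > 0, and set k̃(t) = Σ_{i=1}^m a_i exp(−b_i t). Suppose v, v₁, …, v_m : [0,∞) → H are continuously differentiable, f : [0,∞) → H is continuous, and for all t > 0: B v′(t) + Σ_{i=1}^m a_i C v_i(t) + A v(t) = f(t), v_i′(t) + b_i v_i(t) − v′(t) = 0 for each i, with v(0) = u₀ and v_i(0) = 0 for each i. Then v solves the nonlocal problem: B v′(t) + ∫₀^t k̃(t−s) C v′(s) ds + A v(t) = f(t) for all t > 0, and v(0) = u₀. -/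

import Mathlib

open MeasureTheory

/-- Converse transformation: a solution of the local weakly coupled system
`B v' + Σᵢ aᵢ C vᵢ + A v = f`, `vᵢ' + bᵢ vᵢ - v' = 0`, `v(0) = u₀`,
`vᵢ(0) = 0`, solves the nonlocal problem with kernel
`k̃(t) = Σᵢ aᵢ exp(-bᵢ t)`. -/
theorem local_system_to_nonlocal
    {H : Type*} [NormedAddCommGroup H] [InnerProductSpace ℝ H] [FiniteDimensional ℝ H]
    (A B C : H →ₗ[ℝ] H)
    (m : ℕ) (a b : Fin m → ℝ) (ha : ∀ i, 0 < a i) (hb : ∀ i, 0 < b i)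
    (f : ℝ → H) (hf : ContinuousOn f (Set.Ici 0))
    (v v' : ℝ → H) (vi vi' : Fin m → ℝ → H)
    (hv : ∀ t ∈ Set.Ici (0:ℝ), HasDerivWithinAt v (v' t) (Set.Ici 0) t)
    (hv' : ContinuousOn v' (Set.Ici 0))
    (hvi : ∀ i, ∀ t ∈ Set.Ici (0:ℝ), HasDerivWithinAt (vi i) (vi' i t) (Set.Ici 0) t)
    (hvi' : ∀ i, ContinuousOn (vi' i) (Set.Ici 0))
    (u₀ : H) (hv₀ : v 0 = u₀) (hvi₀ : ∀ i, vi i 0 = 0)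
    (heq : ∀ t > (0:ℝ), B (v' t) + (∑ i, a i • C (vi i t)) + A (v t) = f t)
    (heqi : ∀ i, ∀ t > (0:ℝ), vi' i t + b i • vi i t - v' t = 0) :
    (∀ t > (0:ℝ),
      B (v' t) + (∫ s in (0:ℝ)..t, (∑ i, a i * Real.exp (-(b i) * (t - s))) • C (v' s))
        + A (v t) = f t) ∧ v 0 = u₀ := by
  refine ⟨fun t ht => ?_, hv₀⟩
  classical
  set Cl : H →L[ℝ] H := LinearMap.toContinuousLinearMap C with hCl
  have hClC : ∀ x, Cl x = C x := fun x => rfl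
  have hvint : ∀ i, IntervalIntegrable (fun s => Real.exp (b i * s) • v' s) volume 0 t := by
    intro i
    apply ContinuousOn.intervalIntegrable
    apply ContinuousOn.smul
    · exact (Real.continuous_exp.comp (continuous_const.mul continuous_id)).continuousOn
    · exact hv'.mono (by rw [Set.uIcc_of_le ht.le]; exact fun x hx => hx.1)
  -- key identity
  have key : ∀ i, Real.exp (b i * t) • vi i t
      = ∫ s in (0:ℝ)..t, Real.exp (b i * s) • v' s := by
    intro i
    have hcont : ContinuousOn (fun s => Real.exp (b i * s) • vi i s) (Set.Icc 0 t) := by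
      apply ContinuousOn.smul
      · exact (Real.continuous_exp.comp (continuous_const.mul continuous_id)).continuousOn
      · intro s hs
        exact ((hvi i s hs.1).continuousWithinAt).mono (fun x hx => hx.1)
    have hderiv : ∀ s ∈ Set.Ioo (0:ℝ) t,
        HasDerivAt (fun s => Real.exp (b i * s) • vi i s) (Real.exp (b i * s) • v' s) s := by
      intro s hs
      have h1 : HasDerivAt (fun s => Real.exp (b i * s)) (b i * Real.exp (b i * s)) s := by
        simpa [mul_comm] using ((hasDerivAt_id s).const_mul (b i)).exp
      have h2 : HasDerivAt (vi i) (vi' i s) s := by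
        apply (hvi i s (le_of_lt hs.1)).hasDerivAt
        exact Ici_mem_nhds hs.1
      have h3 := h1.smul h2
      have h4 : vi' i s = v' s - b i • vi i s := by
        have h5 : vi' i s + b i • vi i s = v' s := sub_eq_zero.mp (heqi i s hs.1)
        rw [← h5]; abel
      rw [h4] at h3
      convert h3 using 1
      · rfl
      rw [smul_sub, smul_smul, mul_comm (Real.exp (b i * s)) (b i)]
      abel
    have := intervalIntegral.integral_eq_sub_of_hasDeriv_right_of_le ht.le hcont
      (fun s hs => (hderiv s hs).hasDerivWithinAt) (hvint i)
    rw [this, hvi₀ i]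
    simp
  -- express vi in integral form
  have hvirep : ∀ i, vi i t
      = Real.exp (-(b i * t)) • ∫ s in (0:ℝ)..t, Real.exp (b i * s) • v' s := by
    intro i
    rw [← key i, smul_smul, ← Real.exp_add, neg_add_cancel, Real.exp_zero, one_smul]
  -- rewrite the integral
  have hintrw : (∫ s in (0:ℝ)..t, (∑ i, a i * Real.exp (-(b i) * (t - s))) • C (v' s))
      = ∑ i, a i • C (vi i t) := by
    have hpt : ∀ s : ℝ, (∑ i, a i * Real.exp (-(b i) * (t - s))) • C (v' s)
        = ∑ i, (a i * Real.exp (-(b i * t))) • (Real.exp (b i * s) • Cl (v' s)) := by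
      intro s
      rw [Finset.sum_smul]
      refine Finset.sum_congr rfl fun i _ => ?_
      rw [smul_smul, hClC]
      congr 1
      rw [mul_assoc, ← Real.exp_add]
      ring_nf
    have hCint : ∀ i, IntervalIntegrable (fun s => Real.exp (b i * s) • Cl (v' s)) volume 0 t := by
      intro i
      apply ContinuousOn.intervalIntegrable
      apply ContinuousOn.smul
      · exact (Real.continuous_exp.comp (continuous_const.mul continuous_id)).continuousOn
      · exact Cl.continuous.comp_continuousOn
          (hv'.mono (by rw [Set.uIcc_of_le ht.le]; exact fun x hx => hx.1))
    calc (∫ s in (0:ℝ)..t, (∑ i, a i * Real.exp (-(b i) * (t - s))) • C (v' s))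
        = ∫ s in (0:ℝ)..t, ∑ i, (a i * Real.exp (-(b i * t))) • (Real.exp (b i * s) • Cl (v' s)) :=
          intervalIntegral.integral_congr fun s _ => hpt s
      _ = ∑ i, ∫ s in (0:ℝ)..t, (a i * Real.exp (-(b i * t))) • (Real.exp (b i * s) • Cl (v' s)) := by
          apply intervalIntegral.integral_finset_sum
          intro i _
          exact (hCint i).smul _
      _ = ∑ i, (a i * Real.exp (-(b i * t))) • ∫ s in (0:ℝ)..t, Real.exp (b i * s) • Cl (v' s) := by
          refine Finset.sum_congr rfl fun i _ => ?_
          exact intervalIntegral.integral_smul _ _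
      _ = ∑ i, a i • C (vi i t) := by
          refine Finset.sum_congr rfl fun i _ => ?_
          have hcomm : (∫ s in (0:ℝ)..t, Real.exp (b i * s) • Cl (v' s))
              = Cl (∫ s in (0:ℝ)..t, Real.exp (b i * s) • v' s) := by
            have heqfun : (fun s => Real.exp (b i * s) • Cl (v' s))
                = fun s => Cl (Real.exp (b i * s) • v' s) :=
              funext fun s => (Cl.map_smul _ _).symm
            rw [heqfun]
            exact Cl.intervalIntegral_comp_comm (hvint i)
          rw [hcomm, hvirep i, mul_smul, ← hClC, Cl.map_smul]
  rw [hintrw]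
  exact heq t ht
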